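/- arXiv:1712.06196 — 6 statements merged into one kernel-verified Lean document; each statement's English description precedes it below -/
import Mathlib

section
/- The transpose of F has one-dimensional kernel spanned by the all-ones vector: Ker(F^⊤) = span{(1,…,1)^⊤}. -/
/-- The Maxwell–Stefan matrix `F` with entries `F i j = k i j * c i` for `j ≠ i`
and `F i i = -∑_{r ≠ i} k i r * c r`. The number of species is `m + 1` (so the
paper's `n` equals `m + 1`). -/
def MSmatF (m : ℕ) (k : Fin (m + 1) → Fin (m + 1) → ℝ)
    (c : Fin (m + 1) → ℝ) : Matrix (Fin (m + 1)) (Fin (m + 1)) ℝ :=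
  Matrix.of fun i j =>
    if i = j then -(∑ r ∈ Finset.univ.erase i, k i r * c r) else k i j * c i

/-- For `n = m + 1 ≥ 2` species, symmetric coefficients `k i j = k j i`
which are strictly positive off the diagonal, and strictly positive concentrations
`c i > 0`, the kernel of the transpose of `F` is the span of the all-ones vector. -/
theorem kernel_transpose_F_eq_span_ones
    (m : ℕ) (hm : 1 ≤ m)
    (k : Fin (m + 1) → Fin (m + 1) → ℝ)
    (hsymm : ∀ i j, k i j = k j i)
    (hkpos : ∀ i j, i ≠ j → 0 < k i j)
    (c : Fin (m + 1) → ℝ)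
    (hc : ∀ i, 0 < c i) :
    LinearMap.ker (Matrix.toLin' (MSmatF m k c).transpose)
      = Submodule.span ℝ {fun _ : Fin (m + 1) => (1 : ℝ)} := by
  have key : ∀ v : Fin (m + 1) → ℝ, ∀ i : Fin (m + 1),
      Matrix.toLin' (MSmatF m k c).transpose v i
        = ∑ j ∈ Finset.univ.erase i, k i j * c j * (v j - v i) := by
    intro v i
    simp only [Matrix.toLin'_apply, Matrix.mulVec, dotProduct,
      Matrix.transpose_apply, MSmatF, Matrix.of_apply]
    rw [← Finset.add_sum_erase _ _ (Finset.mem_univ i)]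
    rw [if_pos rfl]
    have h1 : ∑ j ∈ Finset.univ.erase i, (if j = i then
        -(∑ r ∈ Finset.univ.erase j, k j r * c r) else k j i * c j) * v j
        = ∑ j ∈ Finset.univ.erase i, k i j * c j * v j := by
      refine Finset.sum_congr rfl fun j hj => ?_
      rw [if_neg (Finset.mem_erase.mp hj).1, hsymm j i]
    rw [h1]
    have h2 : ∑ j ∈ Finset.univ.erase i, k i j * c j * (v j - v i)
        = (∑ j ∈ Finset.univ.erase i, k i j * c j * v j)
          - (∑ j ∈ Finset.univ.erase i, k i j * c j) * v i := by
      rw [Finset.sum_mul, ← Finset.sum_sub_distrib]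
      refine Finset.sum_congr rfl fun j hj => by ring
    rw [h2]; ring
  apply le_antisymm
  · intro v hv
    rw [LinearMap.mem_ker] at hv
    obtain ⟨i0, hi0⟩ := Finite.exists_max v
    have h0 : ∑ j ∈ Finset.univ.erase i0, k i0 j * c j * (v j - v i0) = 0 := by
      rw [← key v i0, hv]; rfl
    have hzero : ∀ j ∈ Finset.univ.erase i0, k i0 j * c j * (v j - v i0) = 0 := by
      refine (Finset.sum_eq_zero_iff_of_nonpos ?_).mp h0
      intro j hj
      have hji : j ≠ i0 := (Finset.mem_erase.mp hj).1
      have hk := hkpos i0 j (fun h => hji h.symm)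
      nlinarith [mul_pos hk (hc j), hi0 j]
    have hconst : ∀ j, v j = v i0 := by
      intro j
      by_cases h : j = i0
      · rw [h]
      · have hz := hzero j (Finset.mem_erase.mpr ⟨h, Finset.mem_univ j⟩)
        have hk := hkpos i0 j (fun hh => h hh.symm)
        have hcj := hc j
        have : v j - v i0 = 0 := by
          rcases mul_eq_zero.mp hz with h1 | h2
          · rcases mul_eq_zero.mp h1 with h3 | h4 <;> nlinarith
          · exact h2
        linarith
    have hv' : v = v i0 • (fun _ : Fin (m + 1) => (1 : ℝ)) := by
      funext j; simp [hconst j]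
    rw [hv']
    exact Submodule.smul_mem _ _ (Submodule.mem_span_singleton_self _)
  · rw [Submodule.span_le, Set.singleton_subset_iff, SetLike.mem_coe,
      LinearMap.mem_ker]
    funext i
    rw [key]
    simp
end

section
/- Every complex eigenvalue λ of the matrix −F is either equal to 0 or is real and satisfies δ ≤ λ < η; that is, the spectrum of −F is contained in {0} ∪ [δ, η). -/
open Finset ComplexConjugate

private lemma nsq_sub_le (a b : ℂ) :
    Complex.normSq (a - b) ≤ 2 * Complex.normSq a + 2 * Complex.normSq b := by
  simp only [Complex.normSq_apply, Complex.sub_re, Complex.sub_im]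
  nlinarith [sq_nonneg (a.re + b.re), sq_nonneg (a.im + b.im)]

private lemma sum_erase_eq_full {n : Type*} [Fintype n] [DecidableEq n] {M : Type*}
    [AddCommGroup M] (f : n → n → M) :
    (∑ i, ∑ j ∈ Finset.univ.erase i, f i j) = (∑ i, ∑ j, f i j) - ∑ i, f i i := by
  rw [← Finset.sum_sub_distrib]
  exact Finset.sum_congr rfl fun i _ =>
    Finset.sum_erase_eq_sub (Finset.mem_univ i)

private lemma key_identity {n : Type*} [Fintype n] (a : n → ℝ) (w : n → ℂ)
    (hT : ∑ i, (a i : ℂ) * w i = 0) :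
    ∑ i, ∑ j, (a i * a j) * Complex.normSq (w i - w j)
      = 2 * (∑ i, a i) * (∑ i, a i * Complex.normSq (w i)) := by
  have h1 : ∑ i, (a i : ℂ) * conj (w i) = 0 := by
    have := congrArg (starRingEnd ℂ) hT
    simpa [map_sum, Complex.conj_ofReal] using this
  have key : ((∑ i, ∑ j, (a i * a j) * Complex.normSq (w i - w j) : ℝ) : ℂ)
      = ((2 * (∑ i, a i) * (∑ i, a i * Complex.normSq (w i)) : ℝ) : ℂ) := by
    push_cast [Complex.normSq_eq_conj_mul_self]
    calc ∑ i, ∑ j, (a i : ℂ) * (a j : ℂ) * (conj (w i - w j) * (w i - w j))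
        = ∑ i, ∑ j, ((((a i : ℂ) * (conj (w i) * w i)) * (a j : ℂ)
            + (a i : ℂ) * ((a j : ℂ) * (conj (w j) * w j)))
            - (((a i : ℂ) * conj (w i)) * ((a j : ℂ) * w j)
            + ((a i : ℂ) * w i) * ((a j : ℂ) * conj (w j)))) := by
          refine Finset.sum_congr rfl fun i _ => Finset.sum_congr rfl fun j _ => ?_
          rw [map_sub]; ring
      _ = ((∑ i, ∑ j, ((a i : ℂ) * (conj (w i) * w i)) * (a j : ℂ))
            + ∑ i, ∑ j, (a i : ℂ) * ((a j : ℂ) * (conj (w j) * w j)))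
            - ((∑ i, ∑ j, ((a i : ℂ) * conj (w i)) * ((a j : ℂ) * w j))
            + ∑ i, ∑ j, ((a i : ℂ) * w i) * ((a j : ℂ) * conj (w j))) := by
          simp only [Finset.sum_sub_distrib, Finset.sum_add_distrib]
      _ = ((∑ i, (a i : ℂ) * (conj (w i) * w i)) * (∑ j, (a j : ℂ))
            + (∑ i, (a i : ℂ)) * (∑ j, (a j : ℂ) * (conj (w j) * w j)))
            - ((∑ i, (a i : ℂ) * conj (w i)) * (∑ j, (a j : ℂ) * w j)
            + (∑ i, (a i : ℂ) * w i) * (∑ j, (a j : ℂ) * conj (w j))) := by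
          rw [← Finset.sum_mul_sum Finset.univ Finset.univ
              (fun i => (a i : ℂ) * (conj (w i) * w i)) (fun j => (a j : ℂ)),
            ← Finset.sum_mul_sum Finset.univ Finset.univ
              (fun i => (a i : ℂ)) (fun j => (a j : ℂ) * (conj (w j) * w j)),
            ← Finset.sum_mul_sum Finset.univ Finset.univ
              (fun i => (a i : ℂ) * conj (w i)) (fun j => (a j : ℂ) * w j),
            ← Finset.sum_mul_sum Finset.univ Finset.univ
              (fun i => (a i : ℂ) * w i) (fun j => (a j : ℂ) * conj (w j))]
      _ = 2 * (∑ i, (a i : ℂ)) * (∑ i, (a i : ℂ) * (conj (w i) * w i)) := by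
          rw [hT, h1]; ring
  exact_mod_cast key


set_option maxHeartbeats 1600000 in
/-- with `δ = c_min · min_{i ≠ j} k i j` and
`η = 2 c_max ∑_{i ≠ j} k i j`, every complex eigenvalue `μ` of `-F`
(i.e. every element of the spectrum of the complexified matrix `-F`)
is either `0`, or real with `δ ≤ μ < η`. -/
theorem spectrum_neg_F_subset
    (m : ℕ) (hm : 1 ≤ m)
    (k : Fin (m + 1) → Fin (m + 1) → ℝ)
    (hsymm : ∀ i j, k i j = k j i)
    (hkpos : ∀ i j, i ≠ j → 0 < k i j)
    (c : Fin (m + 1) → ℝ)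
    (hc : ∀ i, 0 ≤ c i)
    (cmin cmax : ℝ)
    (hcmin : 0 < cmin)
    (hmin : cmin ≤ ∑ i, c i)
    (hmax : ∑ i, c i ≤ cmax)
    (δ₀ : ℝ)
    (hδ₀ : IsLeast {x : ℝ | ∃ i j : Fin (m + 1), i ≠ j ∧ k i j = x} δ₀)
    (δ η : ℝ)
    (hδ : δ = cmin * δ₀)
    (hη : η = 2 * cmax * ∑ i : Fin (m + 1), ∑ j ∈ Finset.univ.erase i, k i j) :
    ∀ μ ∈ spectrum ℂ ((-(MSmatF m k c)).map (Complex.ofReal)),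
      μ = 0 ∨ (μ.im = 0 ∧ δ ≤ μ.re ∧ μ.re < η) := by
  intro μ hμ
  classical
  -- basic positivity facts
  have hσpos : 0 < ∑ i, c i := lt_of_lt_of_le hcmin hmin
  have hcmax : 0 < cmax := lt_of_lt_of_le hσpos hmax
  have hci_le : ∀ i, c i ≤ cmax := fun i =>
    le_trans (Finset.single_le_sum (fun j _ => hc j) (Finset.mem_univ i)) hmax
  obtain ⟨⟨i₀', j₀', hij₀, hkδ₀⟩, hδ₀lb⟩ := hδ₀
  have hδ₀pos : 0 < δ₀ := hkδ₀ ▸ hkpos _ _ hij₀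
  have hδ₀le : ∀ i j : Fin (m+1), i ≠ j → δ₀ ≤ k i j := fun i j h => hδ₀lb ⟨i, j, h, rfl⟩
  haveI : Nontrivial (Fin (m+1)) := Fin.nontrivial_iff_two_le.mpr (by omega)
  -- row sums
  have hrow_pos : ∀ i : Fin (m+1), 0 < ∑ j ∈ Finset.univ.erase i, k i j := by
    intro i
    obtain ⟨j, hj⟩ := exists_ne i
    exact Finset.sum_pos (fun r hr => hkpos i r (Finset.ne_of_mem_erase hr).symm)
      ⟨j, Finset.mem_erase.2 ⟨hj, Finset.mem_univ j⟩⟩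
  have hSpos : 0 < ∑ i : Fin (m+1), ∑ j ∈ Finset.univ.erase i, k i j :=
    Finset.sum_pos (fun i _ => hrow_pos i) Finset.univ_nonempty
  have hrow_lt : ∀ i : Fin (m+1), (∑ j ∈ Finset.univ.erase i, k i j)
      < ∑ i : Fin (m+1), ∑ j ∈ Finset.univ.erase i, k i j := by
    intro i
    rw [← Finset.add_sum_erase _ _ (Finset.mem_univ i)]
    obtain ⟨i₁, hi₁⟩ := exists_ne i
    have : 0 < ∑ i' ∈ Finset.univ.erase i, ∑ j ∈ Finset.univ.erase i', k i' j :=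
      Finset.sum_pos (fun i' _ => hrow_pos i')
        ⟨i₁, Finset.mem_erase.2 ⟨hi₁, Finset.mem_univ i₁⟩⟩
    linarith
  obtain ⟨i₀, -, hR⟩ := Finset.exists_max_image Finset.univ
    (fun i : Fin (m+1) => ∑ j ∈ Finset.univ.erase i, k i j) Finset.univ_nonempty
  -- eigenvector of the transpose
  rw [spectrum.mem_iff, Matrix.isUnit_iff_isUnit_det, isUnit_iff_ne_zero, not_not] at hμ
  have hdet : ((algebraMap ℂ (Matrix (Fin (m+1)) (Fin (m+1)) ℂ) μ
      - (-(MSmatF m k c)).map Complex.ofReal).transpose).det = 0 := by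
    rwa [Matrix.det_transpose]
  rw [← Matrix.exists_mulVec_eq_zero_iff] at hdet
  obtain ⟨w, hw0, hw⟩ := hdet
  rw [Matrix.transpose_sub, Matrix.sub_mulVec, sub_eq_zero] at hw
  have hwE : ((-(MSmatF m k c)).map Complex.ofReal).transpose.mulVec w = μ • w := by
    rw [← hw]
    funext i
    simp [Matrix.algebraMap_eq_diagonal, Matrix.diagonal_transpose, Matrix.mulVec_diagonal,
      Pi.algebraMap_apply, Algebra.algebraMap_self_apply]
  have hE : ∀ i, (∑ r ∈ Finset.univ.erase i, (k i r : ℂ) * (c r : ℂ)) * w i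
      - ∑ j ∈ Finset.univ.erase i, (k i j : ℂ) * (c j : ℂ) * w j = μ * w i := by
    intro i
    have h1 := congrFun hwE i
    simp only [Matrix.mulVec, dotProduct, Matrix.transpose_apply, Matrix.map_apply,
      Pi.smul_apply, smul_eq_mul] at h1
    rw [← h1, ← Finset.add_sum_erase _ _ (Finset.mem_univ i)]
    have hdiag : ((((-(MSmatF m k c)) i i : ℝ)) : ℂ)
        = ∑ r ∈ Finset.univ.erase i, (k i r : ℂ) * (c r : ℂ) := by
      simp [MSmatF]
    have hoff : ∀ j ∈ Finset.univ.erase i,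
        ((((-(MSmatF m k c)) j i : ℝ)) : ℂ) * w j = -((k i j : ℂ) * (c j : ℂ) * w j) := by
      intro j hj
      have hji : j ≠ i := Finset.ne_of_mem_erase hj
      simp [MSmatF, hji, hsymm j i]
    rw [Finset.sum_congr rfl hoff, hdiag, Finset.sum_neg_distrib]
    ring
  -- the three key identities
  set N : ℝ := ∑ i, c i * Complex.normSq (w i) with hN
  set T : ℂ := ∑ i, (c i : ℂ) * w i with hT
  set G : ℝ := ∑ i, ∑ j, k i j * c i * c j * Complex.normSq (w i - w j) with hG
  set P : ℂ := ∑ i, ∑ j, ((k i j : ℂ) * (c i : ℂ) * (c j : ℂ))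
      * (conj (w i) * w i - conj (w i) * w j) with hP
  have hA : μ * (N : ℂ) = P := by
    have h1 : μ * (N : ℂ) = ∑ i, ((c i : ℂ) * conj (w i)) * (μ * w i) := by
      rw [hN]
      push_cast
      rw [Finset.mul_sum]
      refine Finset.sum_congr rfl fun i _ => ?_
      rw [Complex.normSq_eq_conj_mul_self]
      ring
    rw [h1, hP]
    refine Finset.sum_congr rfl fun i _ => ?_
    rw [← hE i, ← Finset.add_sum_erase _ _ (Finset.mem_univ i)]
    simp only [sub_self, mul_zero, zero_add]
    rw [mul_sub, Finset.sum_mul, Finset.mul_sum, Finset.mul_sum, ← Finset.sum_sub_distrib]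
    exact Finset.sum_congr rfl fun j _ => by ring
  have hswap : P = ∑ i, ∑ j, ((k i j : ℂ) * (c i : ℂ) * (c j : ℂ))
      * (conj (w j) * w j - conj (w j) * w i) := by
    rw [hP, Finset.sum_comm]
    exact Finset.sum_congr rfl fun i _ => Finset.sum_congr rfl fun j _ => by
      rw [hsymm j i]; ring
  have h2P : P + P = (G : ℂ) := by
    nth_rewrite 2 [hswap]
    rw [hP, hG]
    push_cast [Complex.normSq_eq_conj_mul_self]
    rw [← Finset.sum_add_distrib]
    refine Finset.sum_congr rfl fun i _ => ?_
    rw [← Finset.sum_add_distrib]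
    refine Finset.sum_congr rfl fun j _ => ?_
    rw [map_sub]
    ring
  have hC : μ * T = 0 := by
    have h1 : μ * T = ∑ i, (c i : ℂ) * (μ * w i) := by
      rw [hT, Finset.mul_sum]
      exact Finset.sum_congr rfl fun i _ => by ring
    have h2 : ∀ i : Fin (m+1), (c i : ℂ) * (μ * w i)
        = (∑ j ∈ Finset.univ.erase i, ((k i j : ℂ) * (c i : ℂ) * (c j : ℂ)) * w i)
          - ∑ j ∈ Finset.univ.erase i, ((k i j : ℂ) * (c i : ℂ) * (c j : ℂ)) * w j := by
      intro i
      rw [← hE i, mul_sub, Finset.sum_mul, Finset.mul_sum, Finset.mul_sum]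
      congr 1 <;> exact Finset.sum_congr rfl fun j _ => by ring
    rw [h1]
    simp only [h2]
    rw [Finset.sum_sub_distrib, sub_eq_zero,
      sum_erase_eq_full (fun i j => ((k i j : ℂ) * (c i : ℂ) * (c j : ℂ)) * w i),
      sum_erase_eq_full (fun i j => ((k i j : ℂ) * (c i : ℂ) * (c j : ℂ)) * w j)]
    congr 1
    rw [Finset.sum_comm]
    exact Finset.sum_congr rfl fun i _ => Finset.sum_congr rfl fun j _ => by
      rw [hsymm j i]; ring
  have hN0 : 0 ≤ N := Finset.sum_nonneg fun i _ =>
    mul_nonneg (hc i) (Complex.normSq_nonneg _)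
  rcases eq_or_lt_of_le hN0 with hNz | hNpos
  · -- degenerate case: the eigenvector is supported on species with zero concentration
    have hall : ∀ i, c i * Complex.normSq (w i) = 0 := by
      have := (Finset.sum_eq_zero_iff_of_nonneg
        (fun i (_ : i ∈ Finset.univ) => mul_nonneg (hc i) (Complex.normSq_nonneg (w i)))).mp
        (by rw [← hN]; exact hNz.symm)
      exact fun i => this i (Finset.mem_univ i)
    obtain ⟨i, hwi⟩ := Function.ne_iff.mp hw0
    have hci0 : c i = 0 := by
      rcases mul_eq_zero.mp (hall i) with h | h
      · exact h
      · exact absurd (Complex.normSq_eq_zero.mp h) hwi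
    have hcw : ∀ j, (c j : ℂ) * w j = 0 := by
      intro j
      rcases mul_eq_zero.mp (hall j) with h | h
      · simp [h]
      · simp [Complex.normSq_eq_zero.mp h]
    have hsum0 : ∑ j ∈ Finset.univ.erase i, (k i j : ℂ) * (c j : ℂ) * w j = 0 :=
      Finset.sum_eq_zero fun j _ => by rw [mul_assoc, hcw j, mul_zero]
    have hcancel : (∑ r ∈ Finset.univ.erase i, (k i r : ℂ) * (c r : ℂ)) = μ :=
      mul_right_cancel₀ hwi (by rw [← hE i, hsum0, sub_zero])
    have hμeq : μ = ((∑ r ∈ Finset.univ.erase i, k i r * c r : ℝ) : ℂ) := by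
      rw [← hcancel]
      push_cast
      rfl
    right
    refine ⟨by rw [hμeq]; exact Complex.ofReal_im _, ?_, ?_⟩
    · rw [hμeq, Complex.ofReal_re]
      have h1 : ∑ r ∈ Finset.univ.erase i, δ₀ * c r
          ≤ ∑ r ∈ Finset.univ.erase i, k i r * c r :=
        Finset.sum_le_sum fun r hr =>
          mul_le_mul_of_nonneg_right (hδ₀le i r (Finset.ne_of_mem_erase hr).symm) (hc r)
      have h2 : ∑ r ∈ Finset.univ.erase i, δ₀ * c r = δ₀ * ∑ r, c r := by
        rw [← Finset.mul_sum, Finset.sum_erase_eq_sub (Finset.mem_univ i), hci0, sub_zero]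
      have h3 : cmin * δ₀ ≤ (∑ r, c r) * δ₀ :=
        mul_le_mul_of_nonneg_right hmin hδ₀pos.le
      rw [hδ]
      linarith
    · rw [hμeq, Complex.ofReal_re, hη]
      have h1 : ∑ r ∈ Finset.univ.erase i, k i r * c r
          ≤ ∑ r ∈ Finset.univ.erase i, k i r * cmax :=
        Finset.sum_le_sum fun r hr =>
          mul_le_mul_of_nonneg_left (hci_le r)
            (hkpos i r (Finset.ne_of_mem_erase hr).symm).le
      have h2 : ∑ r ∈ Finset.univ.erase i, k i r * cmax
          = cmax * ∑ r ∈ Finset.univ.erase i, k i r := by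
        rw [← Finset.sum_mul]; ring
      have h3 : (∑ j ∈ Finset.univ.erase i, k i j)
          < ∑ i' : Fin (m+1), ∑ j ∈ Finset.univ.erase i', k i' j := hrow_lt i
      nlinarith
  · -- main case: positive weighted norm
    have hμreal : μ = ((G / (2 * N) : ℝ) : ℂ) := by
      have h3 : μ * ((2 * N : ℝ) : ℂ) = (G : ℂ) := by
        push_cast
        rw [← h2P, ← hA]
        ring
      have h4 : ((2 * N : ℝ) : ℂ) ≠ 0 :=
        Complex.ofReal_ne_zero.mpr (mul_pos two_pos hNpos).ne'
      rw [Complex.ofReal_div, eq_div_iff h4]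
      exact h3
    have hG0 : 0 ≤ G := by
      rw [hG]
      refine Finset.sum_nonneg fun i _ => Finset.sum_nonneg fun j _ => ?_
      rcases eq_or_ne i j with rfl | hne
      · simp
      · exact mul_nonneg (mul_nonneg (mul_nonneg (hkpos i j hne).le (hc i)) (hc j))
          (Complex.normSq_nonneg _)
    by_cases hGz : G = 0
    · left
      rw [hμreal, hGz]
      simp
    · right
      have hGpos : 0 < G := lt_of_le_of_ne hG0 (Ne.symm hGz)
      have hμne : μ ≠ 0 := by
        rw [hμreal]
        exact Complex.ofReal_ne_zero.mpr
          (div_ne_zero hGpos.ne' (mul_pos two_pos hNpos).ne')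
      have hT0 : T = 0 := by
        rcases mul_eq_zero.mp hC with h | h
        · exact absurd h hμne
        · exact h
      have hre : μ.re = G / (2 * N) := by rw [hμreal, Complex.ofReal_re]
      refine ⟨by rw [hμreal]; exact Complex.ofReal_im _, ?_, ?_⟩
      · -- lower bound
        have hHr : ∑ i, ∑ j, (c i * c j) * Complex.normSq (w i - w j)
            = 2 * (∑ i, c i) * N := by
          rw [hN]
          exact key_identity c w (by rw [← hT]; exact hT0)
        have hGge : δ₀ * (∑ i, ∑ j, (c i * c j) * Complex.normSq (w i - w j)) ≤ G := by
          rw [hG, Finset.mul_sum]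
          refine Finset.sum_le_sum fun i _ => ?_
          rw [Finset.mul_sum]
          refine Finset.sum_le_sum fun j _ => ?_
          rcases eq_or_ne i j with rfl | hne
          · simp
          · have h := hδ₀le i j hne
            nlinarith [Complex.normSq_nonneg (w i - w j),
              mul_nonneg (hc i) (hc j),
              mul_nonneg (mul_nonneg (hc i) (hc j)) (Complex.normSq_nonneg (w i - w j))]
        rw [hre, le_div_iff₀ (mul_pos two_pos hNpos), hδ]
        rw [hHr] at hGge
        nlinarith [mul_nonneg (mul_nonneg (sub_nonneg.2 hmin) hδ₀pos.le) hNpos.le]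
      · -- upper bound
        have hGe : G = ∑ i, ∑ j ∈ Finset.univ.erase i,
            k i j * c i * c j * Complex.normSq (w i - w j) := by
          rw [hG]
          refine Finset.sum_congr rfl fun i _ => ?_
          rw [← Finset.add_sum_erase _ _ (Finset.mem_univ i)]
          simp
        have hswap2 : (∑ i, ∑ j ∈ Finset.univ.erase i,
              k i j * c i * c j * Complex.normSq (w j))
            = ∑ i, ∑ j ∈ Finset.univ.erase i,
              k i j * c i * c j * Complex.normSq (w i) := by
          rw [sum_erase_eq_full (fun i j => k i j * c i * c j * Complex.normSq (w j)),
            sum_erase_eq_full (fun i j => k i j * c i * c j * Complex.normSq (w i))]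
          congr 1
          rw [Finset.sum_comm]
          exact Finset.sum_congr rfl fun i _ => Finset.sum_congr rfl fun j _ => by
            rw [hsymm j i]; ring
        have hbound : G ≤ ∑ i, ∑ j ∈ Finset.univ.erase i,
            (2 * (k i j * c i * c j * Complex.normSq (w i))
              + 2 * (k i j * c i * c j * Complex.normSq (w j))) := by
          rw [hGe]
          refine Finset.sum_le_sum fun i _ => Finset.sum_le_sum fun j hj => ?_
          have hkn : 0 ≤ k i j * c i * c j :=
            mul_nonneg (mul_nonneg (hkpos i j (Finset.ne_of_mem_erase hj).symm).le (hc i)) (hc j)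
          nlinarith [nsq_sub_le (w i) (w j)]
        have hX : (∑ i, ∑ j ∈ Finset.univ.erase i, k i j * c i * c j * Complex.normSq (w i))
            ≤ cmax * (∑ j ∈ Finset.univ.erase i₀, k i₀ j) * N := by
          have step : ∀ i : Fin (m+1),
              (∑ j ∈ Finset.univ.erase i, k i j * c i * c j * Complex.normSq (w i))
                ≤ (c i * Complex.normSq (w i)) * (cmax * ∑ j ∈ Finset.univ.erase i₀, k i₀ j) := by
            intro i
            have e1 : (∑ j ∈ Finset.univ.erase i, k i j * c i * c j * Complex.normSq (w i))
                = (c i * Complex.normSq (w i)) * ∑ j ∈ Finset.univ.erase i, k i j * c j := by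
              rw [Finset.mul_sum]
              exact Finset.sum_congr rfl fun j _ => by ring
            rw [e1]
            have e2 : (∑ j ∈ Finset.univ.erase i, k i j * c j)
                ≤ cmax * ∑ j ∈ Finset.univ.erase i₀, k i₀ j := by
              calc (∑ j ∈ Finset.univ.erase i, k i j * c j)
                  ≤ ∑ j ∈ Finset.univ.erase i, k i j * cmax :=
                    Finset.sum_le_sum fun j hj => mul_le_mul_of_nonneg_left (hci_le j)
                      (hkpos i j (Finset.ne_of_mem_erase hj).symm).le
                _ = (∑ j ∈ Finset.univ.erase i, k i j) * cmax := by rw [Finset.sum_mul]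
                _ ≤ (∑ j ∈ Finset.univ.erase i₀, k i₀ j) * cmax :=
                    mul_le_mul_of_nonneg_right (hR i (Finset.mem_univ i)) hcmax.le
                _ = cmax * ∑ j ∈ Finset.univ.erase i₀, k i₀ j := by ring
            exact mul_le_mul_of_nonneg_left e2
              (mul_nonneg (hc i) (Complex.normSq_nonneg _))
          calc (∑ i, ∑ j ∈ Finset.univ.erase i, k i j * c i * c j * Complex.normSq (w i))
              ≤ ∑ i, (c i * Complex.normSq (w i))
                  * (cmax * ∑ j ∈ Finset.univ.erase i₀, k i₀ j) :=
                Finset.sum_le_sum fun i _ => step i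
            _ = cmax * (∑ j ∈ Finset.univ.erase i₀, k i₀ j) * N := by
                rw [hN, ← Finset.sum_mul]; ring
        have hb2 : (∑ i, ∑ j ∈ Finset.univ.erase i,
              (2 * (k i j * c i * c j * Complex.normSq (w i))
                + 2 * (k i j * c i * c j * Complex.normSq (w j))))
            = 2 * (∑ i, ∑ j ∈ Finset.univ.erase i,
                k i j * c i * c j * Complex.normSq (w i))
              + 2 * (∑ i, ∑ j ∈ Finset.univ.erase i,
                k i j * c i * c j * Complex.normSq (w j)) := by
          simp only [Finset.sum_add_distrib, ← Finset.mul_sum]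
        have hG4 : G ≤ 4 * (cmax * (∑ j ∈ Finset.univ.erase i₀, k i₀ j) * N) := by
          rw [hb2, hswap2] at hbound
          linarith [hX]
        have hRS : (∑ j ∈ Finset.univ.erase i₀, k i₀ j)
            < ∑ i' : Fin (m+1), ∑ j ∈ Finset.univ.erase i', k i' j := hrow_lt i₀
        rw [hre, div_lt_iff₀ (mul_pos two_pos hNpos), hη]
        nlinarith [mul_pos (mul_pos hcmax (sub_pos.2 hRS)) hNpos]
end

section
/- With X the n×n matrix having X_{ii} = 1 for all i, X_{nj} = −1 for j = 1,…,n−1, and all other entries 0, and Y the n×n matrix having Y_{ii} = 1 for all i, Y_{nj} = 1 for j = 1,…,n−1, and all other entries 0, one has Y = X^{−1}, and the conjugated matrix Y F X is blockwise upper triangular: its (i,j) entry equals −[F_0]_{ij} for i,j ≤ n−1, its (i,n) entry equals k_{in} c_i for i ≤ n−1, and its n-th row is identically zero. -/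
/-- The reduced matrix `F₀` with entries `[F₀] i j = -(k i j - k i n) * c i` for
`i ≠ j` and `[F₀] i i = ∑_{j ≠ i, j ≤ n-1} (k i j - k i n) * c j + c_tot * k i n`,
where `c_tot = ∑ r, c r` and `n` denotes the last index `Fin.last m`. -/
def MSmatF0 (m : ℕ) (k : Fin (m + 1) → Fin (m + 1) → ℝ)
    (c : Fin (m + 1) → ℝ) : Matrix (Fin m) (Fin m) ℝ :=
  Matrix.of fun i j =>
    if i = j then
      (∑ j' ∈ Finset.univ.erase i,
          (k i.castSucc j'.castSucc - k i.castSucc (Fin.last m)) * c j'.castSucc)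
        + (∑ r, c r) * k i.castSucc (Fin.last m)
    else -((k i.castSucc j.castSucc - k i.castSucc (Fin.last m)) * c i.castSucc)

/-- with `X` the matrix with `X i i = 1`, `X n j = -1` for `j ≠ n`,
`0` otherwise, and `Y` the matrix with `Y i i = 1`, `Y n j = 1` for `j ≠ n`,
`0` otherwise, one has `Y = X⁻¹`, and `Y * F * X` is blockwise upper triangular:
its `(i, j)` entry is `-[F₀] i j` for `i, j ≤ n - 1`, its `(i, n)` entry is
`k i n * c i` for `i ≤ n - 1`, and its `n`-th row vanishes. -/
theorem conjugated_F_blockwise_upper_triangular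
    (m : ℕ) (hm : 1 ≤ m)
    (k : Fin (m + 1) → Fin (m + 1) → ℝ)
    (hsymm : ∀ i j, k i j = k j i)
    (hkpos : ∀ i j, i ≠ j → 0 < k i j)
    (c : Fin (m + 1) → ℝ)
    (hc : ∀ i, 0 ≤ c i)
    (X Y : Matrix (Fin (m + 1)) (Fin (m + 1)) ℝ)
    (hX : X = Matrix.of fun i j =>
      if i = j then 1 else if i = Fin.last m then (-1 : ℝ) else 0)
    (hY : Y = Matrix.of fun i j =>
      if i = j then 1 else if i = Fin.last m then (1 : ℝ) else 0) :
    Y = X⁻¹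
      ∧ (∀ i j : Fin m,
          (Y * MSmatF m k c * X) i.castSucc j.castSucc = -(MSmatF0 m k c i j))
      ∧ (∀ i : Fin m,
          (Y * MSmatF m k c * X) i.castSucc (Fin.last m)
            = k i.castSucc (Fin.last m) * c i.castSucc)
      ∧ (∀ j : Fin (m + 1), (Y * MSmatF m k c * X) (Fin.last m) j = 0) := by
  subst hX hY
  -- column sums of F vanish
  have hcol : ∀ s, ∑ r, MSmatF m k c r s = 0 := by
    intro s
    rw [← Finset.sum_erase_add _ _ (Finset.mem_univ s)]
    have h1 : ∀ r ∈ Finset.univ.erase s, MSmatF m k c r s = k s r * c r := by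
      intro r hr
      rw [Finset.mem_erase] at hr
      simp [MSmatF, hr.1, hsymm r s]
    rw [Finset.sum_congr rfl h1]
    simp [MSmatF]
  -- left multiplication by Y preserves non-last rows
  have hYrow : ∀ (A : Matrix (Fin (m + 1)) (Fin (m + 1)) ℝ) (i : Fin (m + 1)),
      i ≠ Fin.last m → ∀ s,
      ((Matrix.of fun i j => if i = j then 1 else
        if i = Fin.last m then (1 : ℝ) else 0) * A) i s = A i s := by
    intro A i hi s
    simp [Matrix.mul_apply, hi, ite_mul]
  have hYF2 : ∀ s,
      ((Matrix.of fun i j => if i = j then 1 else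
        if i = Fin.last m then (1 : ℝ) else 0) * MSmatF m k c) (Fin.last m) s
      = 0 := by
    intro s
    simpa [Matrix.mul_apply] using hcol s
  -- right multiplication by X: column formulas
  have hXcol : ∀ (f : Fin (m + 1) → ℝ) (j : Fin m),
      ∑ s, f s * (if s = j.castSucc then (1:ℝ) else
        if s = Fin.last m then (-1 : ℝ) else 0)
      = f j.castSucc - f (Fin.last m) := by
    intro f j
    have hne : j.castSucc ≠ Fin.last m := (Fin.castSucc_lt_last j).ne
    have key : ∀ s : Fin (m + 1),
        f s * (if s = j.castSucc then (1:ℝ) else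
          if s = Fin.last m then (-1 : ℝ) else 0)
        = (if s = j.castSucc then f s else 0) + (if s = Fin.last m then -f s else 0) := by
      intro s
      by_cases h1 : s = j.castSucc
      · subst h1; simp [hne]
      · by_cases h2 : s = Fin.last m
        · subst h2; simp [h1]
        · simp [h1, h2]
    rw [Finset.sum_congr rfl fun s _ => key s, Finset.sum_add_distrib]
    simp [sub_eq_add_neg]
  have hXlast : ∀ (f : Fin (m + 1) → ℝ),
      ∑ s, f s * (if s = Fin.last m then (1:ℝ) else
        if s = Fin.last m then (-1 : ℝ) else 0)
      = f (Fin.last m) := by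
    intro f
    have key : ∀ s : Fin (m + 1),
        f s * (if s = Fin.last m then (1:ℝ) else
          if s = Fin.last m then (-1 : ℝ) else 0)
        = if s = Fin.last m then f s else 0 := by
      intro s; split_ifs <;> simp
    rw [Finset.sum_congr rfl fun s _ => key s]
    simp
  refine ⟨?_, ?_, ?_, ?_⟩
  · -- Y = X⁻¹
    symm
    apply Matrix.inv_eq_left_inv
    ext i j
    by_cases hi : i = Fin.last m
    · subst hi
      rw [Matrix.mul_apply]
      have h1 : ∀ s : Fin (m + 1),
          (Matrix.of fun i j => if i = j then 1 else
            if i = Fin.last m then (1 : ℝ) else 0) (Fin.last m) s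
          * (Matrix.of fun i j => if i = j then 1 else
            if i = Fin.last m then (-1 : ℝ) else 0) s j
          = (1:ℝ) * (if s = j then (1:ℝ) else if s = Fin.last m then (-1:ℝ) else 0) := by
        intro s
        simp only [Matrix.of_apply]
        split_ifs <;> simp
      rw [Finset.sum_congr rfl fun s _ => h1 s]
      by_cases hj : j = Fin.last m
      · subst hj
        rw [hXlast (fun _ => (1:ℝ))]
        simp [Matrix.one_apply]
      · obtain ⟨j', rfl⟩ := Fin.exists_castSucc_eq.mpr hj
        rw [hXcol (fun _ => (1:ℝ)) j']
        simp [Matrix.one_apply, (Fin.castSucc_lt_last j').ne']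
    · rw [hYrow _ i hi j]
      simp [Matrix.one_apply, hi]
  · -- main block
    intro i j
    have hine : i.castSucc ≠ Fin.last m := (Fin.castSucc_lt_last i).ne
    rw [Matrix.mul_apply]
    rw [Finset.sum_congr rfl fun s _ => by rw [hYrow _ _ hine s]]
    simp only [Matrix.of_apply]
    rw [hXcol (fun s => MSmatF m k c i.castSucc s) j]
    by_cases hij : i = j
    · subst hij
      simp only [MSmatF, MSmatF0, Matrix.of_apply, if_pos rfl, if_neg hine]
      rw [Finset.sum_erase_eq_sub (Finset.mem_univ i.castSucc),
          Finset.sum_erase_eq_sub (Finset.mem_univ i),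
          Fin.sum_univ_castSucc (f := fun r => k i.castSucc r * c r),
          Fin.sum_univ_castSucc (f := c)]
      simp only [sub_mul, Finset.sum_sub_distrib, ← Finset.mul_sum, if_true]
      ring
    · have hij' : i.castSucc ≠ j.castSucc := by
        simpa [Fin.castSucc_inj] using hij
      simp only [MSmatF, MSmatF0, Matrix.of_apply, if_neg hij', if_neg hine, if_neg hij]
      ring
  · intro i
    have hine : i.castSucc ≠ Fin.last m := (Fin.castSucc_lt_last i).ne
    rw [Matrix.mul_apply]
    rw [Finset.sum_congr rfl fun s _ => by rw [hYrow _ _ hine s]]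
    simp only [Matrix.of_apply]
    rw [hXlast (fun s => MSmatF m k c i.castSucc s)]
    simp [MSmatF, hine]
  · intro j
    rw [Matrix.mul_apply]
    rw [Finset.sum_congr rfl fun s _ => by rw [hYF2 s]]
    simp
end

section
/- Algebraic inversion of the flux–gradient relations: let d ≥ 1, let J, D ∈ ℝ^{n×d}, g ∈ ℝ^d and α ∈ ℝ. Suppose that F J = D and that the rows of J satisfy the closure relation ∑_{i=1}^n J_{ij} = −α g_j for every j = 1,…,d. Then the submatrix J′ ∈ ℝ^{(n−1)×d} consisting of the first n−1 rows of J satisfies F_0 J′ = −(D′ + α c̃′ ⊗ g), where D′ ∈ ℝ^{(n−1)×d} consists of the first n−1 rows of D and (c̃′ ⊗ g)_{ij} = c̃′_i g_j; consequently J′ = −F_0^{−1}(D′ + α c̃′ ⊗ g). -/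
/-- The vector `c̃′` with entries `(c̃′) i = k i n * c i`, `i = 1, …, n - 1`. -/
def MSctil (m : ℕ) (k : Fin (m + 1) → Fin (m + 1) → ℝ)
    (c : Fin (m + 1) → ℝ) : Fin m → ℝ :=
  fun i => k i.castSucc (Fin.last m) * c i.castSucc

open Matrix

/-- Splitting a sum over `Fin (m+1)` minus `i.castSucc` into the sum over
`Fin m` minus `i`, plus the last term. -/
lemma MS_erase_castSucc_sum (m : ℕ) (i : Fin m) (f : Fin (m+1) → ℝ) :
    ∑ r ∈ Finset.univ.erase i.castSucc, f r
      = (∑ j ∈ Finset.univ.erase i, f j.castSucc) + f (Fin.last m) := by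
  rw [Finset.sum_erase_eq_sub (Finset.mem_univ _), Finset.sum_erase_eq_sub (Finset.mem_univ _),
      Fin.sum_univ_castSucc]
  ring

/-- The key algebraic identity relating `F₀` and `F`. -/
lemma MSkey (m : ℕ) (k : Fin (m + 1) → Fin (m + 1) → ℝ) (c w : Fin (m + 1) → ℝ)
    (i : Fin m) :
    (MSmatF0 m k c *ᵥ fun i' => w i'.castSucc) i
      = -((MSmatF m k c *ᵥ w) i.castSucc)
        + k i.castSucc (Fin.last m) * c i.castSucc * (∑ r, w r) := by
  have split1 : ∀ f : Fin m → ℝ,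
      ∑ j', f j' = f i + ∑ j' ∈ Finset.univ.erase i, f j' :=
    fun f => (Finset.add_sum_erase _ f (Finset.mem_univ i)).symm
  have split2 : ∀ f : Fin (m+1) → ℝ,
      ∑ r, f r = f i.castSucc + ∑ r ∈ Finset.univ.erase i.castSucc, f r :=
    fun f => (Finset.add_sum_erase _ f (Finset.mem_univ i.castSucc)).symm
  simp only [MSmatF0, MSmatF, Matrix.mulVec, Matrix.of_apply, dotProduct]
  rw [split1 (fun j' => (if i = j' then _ else _) * w j'.castSucc),
      split2 (fun r => (if i.castSucc = r then _ else _) * w r)]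
  rw [if_pos rfl, if_pos rfl]
  have e1 : (∑ j' ∈ Finset.univ.erase i,
        (if i = j' then
            (∑ j'' ∈ Finset.univ.erase i,
              (k i.castSucc j''.castSucc - k i.castSucc (Fin.last m)) * c j''.castSucc)
              + (∑ r, c r) * k i.castSucc (Fin.last m)
          else -((k i.castSucc j'.castSucc - k i.castSucc (Fin.last m)) * c i.castSucc))
          * w j'.castSucc)
      = ∑ j' ∈ Finset.univ.erase i,
          -((k i.castSucc j'.castSucc - k i.castSucc (Fin.last m)) * c i.castSucc)
            * w j'.castSucc := by
    refine Finset.sum_congr rfl fun j hj => ?_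
    rw [if_neg (Ne.symm (Finset.ne_of_mem_erase hj))]
  have e2 : (∑ r ∈ Finset.univ.erase i.castSucc,
        (if i.castSucc = r then
            -(∑ r' ∈ Finset.univ.erase i.castSucc, k i.castSucc r' * c r')
          else k i.castSucc r * c i.castSucc) * w r)
      = ∑ r ∈ Finset.univ.erase i.castSucc, k i.castSucc r * c i.castSucc * w r := by
    refine Finset.sum_congr rfl fun r hr => ?_
    rw [if_neg (Ne.symm (Finset.ne_of_mem_erase hr))]
  rw [e1, e2]
  rw [MS_erase_castSucc_sum m i (fun r => k i.castSucc r * c r),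
      MS_erase_castSucc_sum m i (fun r => k i.castSucc r * c i.castSucc * w r)]
  rw [Fin.sum_univ_castSucc c, Fin.sum_univ_castSucc w,
      split1 (fun j => c j.castSucc), split1 (fun j => w j.castSucc)]
  have h1 : ∑ j' ∈ Finset.univ.erase i,
        (k i.castSucc j'.castSucc - k i.castSucc (Fin.last m)) * c j'.castSucc
      = (∑ j' ∈ Finset.univ.erase i, k i.castSucc j'.castSucc * c j'.castSucc)
        - k i.castSucc (Fin.last m) * ∑ j' ∈ Finset.univ.erase i, c j'.castSucc := by
    rw [Finset.mul_sum, ← Finset.sum_sub_distrib]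
    exact Finset.sum_congr rfl fun j _ => by ring
  have h3 : ∑ j' ∈ Finset.univ.erase i,
        -((k i.castSucc j'.castSucc - k i.castSucc (Fin.last m)) * c i.castSucc) * w j'.castSucc
      = -(∑ j' ∈ Finset.univ.erase i, k i.castSucc j'.castSucc * c i.castSucc * w j'.castSucc)
        + k i.castSucc (Fin.last m) * c i.castSucc * ∑ j' ∈ Finset.univ.erase i, w j'.castSucc := by
    rw [Finset.mul_sum, ← Finset.sum_neg_distrib, ← Finset.sum_add_distrib]
    exact Finset.sum_congr rfl fun j _ => by ring
  rw [h1, h3]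
  ring

/-- Column sums of `F` vanish. -/
lemma MScolsum (m : ℕ) (k : Fin (m + 1) → Fin (m + 1) → ℝ)
    (hsymm : ∀ i j, k i j = k j i) (c : Fin (m + 1) → ℝ) (j : Fin (m + 1)) :
    ∑ i, MSmatF m k c i j = 0 := by
  rw [← Finset.add_sum_erase _ _ (Finset.mem_univ j)]
  have e : ∑ i ∈ Finset.univ.erase j, MSmatF m k c i j
      = ∑ i ∈ Finset.univ.erase j, k j i * c i := by
    refine Finset.sum_congr rfl fun i hi => ?_
    simp only [MSmatF, Matrix.of_apply]
    rw [if_neg (Finset.ne_of_mem_erase hi), hsymm i j]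
  rw [e]
  simp only [MSmatF, Matrix.of_apply, if_true]
  ring

/-- Rows of `F` applied to `w`, in symmetrized form. -/
lemma MSrow (m : ℕ) (k : Fin (m + 1) → Fin (m + 1) → ℝ) (c : Fin (m + 1) → ℝ)
    (w : Fin (m + 1) → ℝ) (hw : MSmatF m k c *ᵥ w = 0) (i : Fin (m + 1)) :
    ∑ r ∈ Finset.univ.erase i, k i r * (c i * w r - c r * w i) = 0 := by
  have hthis := congrFun hw i
  simp only [Matrix.mulVec, dotProduct, MSmatF, Matrix.of_apply, Pi.zero_apply] at hthis
  rw [← Finset.add_sum_erase _ _ (Finset.mem_univ i), if_pos rfl] at hthis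
  have e : ∑ r ∈ Finset.univ.erase i,
        (if i = r then -(∑ r' ∈ Finset.univ.erase i, k i r' * c r') else k i r * c i) * w r
      = ∑ r ∈ Finset.univ.erase i, k i r * c i * w r := by
    refine Finset.sum_congr rfl fun r hr => ?_
    rw [if_neg (Ne.symm (Finset.ne_of_mem_erase hr))]
  rw [e] at hthis
  calc ∑ r ∈ Finset.univ.erase i, k i r * (c i * w r - c r * w i)
      = ∑ r ∈ Finset.univ.erase i, (k i r * c i * w r - k i r * c r * w i) :=
        Finset.sum_congr rfl fun r _ => by ring
    _ = ∑ r ∈ Finset.univ.erase i, k i r * c i * w r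
          - (∑ r ∈ Finset.univ.erase i, k i r * c r) * w i := by
        rw [Finset.sum_sub_distrib, Finset.sum_mul]
    _ = 0 := by rw [← hthis]; ring

/-- Trivial kernel of `F` on the hyperplane of zero-sum vectors. -/
lemma MSkerF (m : ℕ) (k : Fin (m + 1) → Fin (m + 1) → ℝ)
    (hkpos : ∀ i j, i ≠ j → 0 < k i j)
    (c : Fin (m + 1) → ℝ) (hc : ∀ i, 0 ≤ c i) (hpos : 0 < ∑ i, c i)
    (w : Fin (m + 1) → ℝ) (hw : MSmatF m k c *ᵥ w = 0)
    (hsum : ∑ r, w r = 0) : w = 0 := by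
  have hzero : ∀ i, c i = 0 → w i = 0 := by
    intro i hci
    have hrow := MSrow m k c w hw i
    have e : ∑ r ∈ Finset.univ.erase i, k i r * (c i * w r - c r * w i)
        = -((∑ r ∈ Finset.univ.erase i, k i r * c r) * w i) := by
      rw [Finset.sum_mul, ← Finset.sum_neg_distrib]
      refine Finset.sum_congr rfl fun r _ => ?_
      rw [hci]; ring
    rw [e] at hrow
    have hpos' : 0 < ∑ r ∈ Finset.univ.erase i, k i r * c r := by
      have hex : ∃ r ∈ Finset.univ.erase i, 0 < c r := by
        by_contra hno
        push_neg at hno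
        have : ∑ r, c r = 0 := by
          rw [← Finset.add_sum_erase _ _ (Finset.mem_univ i), hci]
          rw [Finset.sum_eq_zero fun r hr => le_antisymm (hno r hr) (hc r)]
          ring
        linarith
      obtain ⟨r, hr, hcr⟩ := hex
      refine Finset.sum_pos' (fun r' hr' => mul_nonneg
        (le_of_lt (hkpos i r' (Ne.symm (Finset.ne_of_mem_erase hr')))) (hc r')) ⟨r, hr, ?_⟩
      exact mul_pos (hkpos i r (Ne.symm (Finset.ne_of_mem_erase hr))) hcr
    have := mul_eq_zero.mp
      (by linarith [hrow] : (∑ r ∈ Finset.univ.erase i, k i r * c r) * w i = 0)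
    rcases this with h | h
    · exact absurd h (ne_of_gt hpos')
    · exact h
  classical
  set S : Finset (Fin (m + 1)) := Finset.univ.filter (fun i => 0 < c i) with hS
  have hSne : S.Nonempty := by
    by_contra hne
    rw [Finset.not_nonempty_iff_eq_empty] at hne
    have : ∑ i, c i = 0 := Finset.sum_eq_zero fun i _ => by
      by_contra hci
      have h1 : 0 < c i := lt_of_le_of_ne (hc i) (Ne.symm hci)
      have h2 : i ∈ S := by simp [hS, h1]
      simp [hne] at h2
    linarith
  obtain ⟨i0, hi0S, hi0max⟩ := S.exists_max_image (fun i => w i / c i) hSne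
  have hci0 : 0 < c i0 := (Finset.mem_filter.mp hi0S).2
  have hrow := MSrow m k c w hw i0
  have hterm : ∀ r ∈ Finset.univ.erase i0, k i0 r * (c i0 * w r - c r * w i0) ≤ 0 := by
    intro r hr
    rcases eq_or_lt_of_le (hc r) with hcr | hcr
    · rw [← hcr, hzero r hcr.symm]
      simp
    · have hle : w r / c r ≤ w i0 / c i0 :=
        hi0max r (Finset.mem_filter.mpr ⟨Finset.mem_univ r, hcr⟩)
      have hnp : c i0 * w r - c r * w i0 ≤ 0 := by
        rw [div_le_div_iff₀ hcr hci0] at hle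
        nlinarith
      have hk := hkpos i0 r (Ne.symm (Finset.ne_of_mem_erase hr))
      nlinarith
  have hall := (Finset.sum_eq_zero_iff_of_nonpos hterm).mp hrow
  have hratio : ∀ j, w j * c i0 = w i0 * c j := by
    intro j
    rcases eq_or_ne j i0 with rfl | hne
    · ring
    · rcases eq_or_lt_of_le (hc j) with hcj | hcj
      · rw [hzero j hcj.symm, ← hcj]; ring
      · have hj : j ∈ Finset.univ.erase i0 :=
          Finset.mem_erase.mpr ⟨hne, Finset.mem_univ j⟩
        have hz := hall j hj
        have hk := hkpos i0 j (Ne.symm hne)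
        have hzz : c i0 * w j - c j * w i0 = 0 := by
          rcases mul_eq_zero.mp hz with h | h
          · exact absurd h (ne_of_gt hk)
          · exact h
        nlinarith [hzz]
  have hwi0 : w i0 = 0 := by
    have hsum2 : ∑ j, w j * c i0 = ∑ j, w i0 * c j :=
      Finset.sum_congr rfl fun j _ => hratio j
    rw [← Finset.sum_mul, hsum, ← Finset.mul_sum] at hsum2
    have h0 : w i0 * ∑ j, c j = 0 := by linarith
    rcases mul_eq_zero.mp h0 with h | h
    · exact h
    · exact absurd h (ne_of_gt hpos)
  funext j
  have h1 := hratio j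
  rw [hwi0] at h1
  have h2 : w j * c i0 = 0 := by linarith
  rcases mul_eq_zero.mp h2 with h | h
  · exact h
  · exact absurd h (ne_of_gt hci0)

/-- `F₀` has nonzero determinant. -/
lemma MSdetF0 (m : ℕ) (k : Fin (m + 1) → Fin (m + 1) → ℝ)
    (hsymm : ∀ i j, k i j = k j i)
    (hkpos : ∀ i j, i ≠ j → 0 < k i j)
    (c : Fin (m + 1) → ℝ) (hc : ∀ i, 0 ≤ c i) (hpos : 0 < ∑ i, c i) :
    (MSmatF0 m k c).det ≠ 0 := by
  intro hdet
  obtain ⟨v, hv, hv0⟩ := (Matrix.exists_mulVec_eq_zero_iff).mpr hdet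
  set w : Fin (m + 1) → ℝ := Fin.snoc v (-(∑ i, v i)) with hwdef
  have hwc : (fun i' : Fin m => w i'.castSucc) = v := by
    funext i'; simp [hwdef, Fin.snoc_castSucc]
  have hsumw : ∑ r, w r = 0 := by
    rw [Fin.sum_univ_castSucc]
    simp [hwdef, Fin.snoc_castSucc, Fin.snoc_last]
  have hcast : ∀ i : Fin m, (MSmatF m k c *ᵥ w) i.castSucc = 0 := by
    intro i
    have hk := MSkey m k c w i
    rw [hwc, hv0, hsumw, mul_zero] at hk
    simp only [Pi.zero_apply] at hk
    linarith [hk]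
  have hlast : (MSmatF m k c *ᵥ w) (Fin.last m) = 0 := by
    have htot : ∑ i, (MSmatF m k c *ᵥ w) i = 0 := by
      simp only [Matrix.mulVec, dotProduct]
      rw [Finset.sum_comm]
      refine Finset.sum_eq_zero fun r _ => ?_
      rw [← Finset.sum_mul, MScolsum m k hsymm c r, zero_mul]
    rw [Fin.sum_univ_castSucc] at htot
    rw [Finset.sum_congr rfl (fun i _ => hcast i)] at htot
    simpa using htot
  have hker : MSmatF m k c *ᵥ w = 0 := by
    funext r
    refine Fin.lastCases ?_ ?_ r
    · exact hlast
    · exact fun i => hcast i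
  have hw0 := MSkerF m k hkpos c hc hpos w hker hsumw
  apply hv
  funext i
  rw [← congrFun hwc i, hw0]
  rfl

/-- algebraic inversion of the flux–gradient relations: if
`F J = D` and the columns of `J` satisfy the closure relation
`∑ i, J i j = -α g j`, then the submatrix `J′` of the first `n - 1` rows of `J`
satisfies `F₀ J′ = -(D′ + α c̃′ ⊗ g)`, and consequently
`J′ = -F₀⁻¹ (D′ + α c̃′ ⊗ g)`. -/
theorem flux_gradient_inversion
    (m : ℕ) (hm : 1 ≤ m)
    (k : Fin (m + 1) → Fin (m + 1) → ℝ)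
    (hsymm : ∀ i j, k i j = k j i)
    (hkpos : ∀ i j, i ≠ j → 0 < k i j)
    (c : Fin (m + 1) → ℝ)
    (hc : ∀ i, 0 ≤ c i)
    (cmin cmax : ℝ)
    (hcmin : 0 < cmin)
    (hmin : cmin ≤ ∑ i, c i)
    (hmax : ∑ i, c i ≤ cmax)
    (d : ℕ) (hd : 1 ≤ d)
    (J D : Matrix (Fin (m + 1)) (Fin d) ℝ)
    (g : Fin d → ℝ) (α : ℝ)
    (hFJ : MSmatF m k c * J = D)
    (hclos : ∀ j : Fin d, ∑ i, J i j = -(α * g j)) :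
    MSmatF0 m k c * Matrix.of (fun (i : Fin m) (j : Fin d) => J i.castSucc j)
        = -(Matrix.of (fun (i : Fin m) (j : Fin d) => D i.castSucc j)
            + α • Matrix.vecMulVec (MSctil m k c) g)
      ∧
      Matrix.of (fun (i : Fin m) (j : Fin d) => J i.castSucc j)
        = -((MSmatF0 m k c)⁻¹
            * (Matrix.of (fun (i : Fin m) (j : Fin d) => D i.castSucc j)
               + α • Matrix.vecMulVec (MSctil m k c) g)) := by
  have hpos : 0 < ∑ i, c i := lt_of_lt_of_le hcmin hmin
  have h1 : MSmatF0 m k c * Matrix.of (fun (i : Fin m) (j : Fin d) => J i.castSucc j)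
      = -(Matrix.of (fun (i : Fin m) (j : Fin d) => D i.castSucc j)
          + α • Matrix.vecMulVec (MSctil m k c) g) := by
    ext i j
    have hk := MSkey m k c (fun r => J r j) i
    have hFr : (MSmatF m k c *ᵥ fun r => J r j) i.castSucc = D i.castSucc j := by
      rw [← hFJ]
      simp [Matrix.mulVec, Matrix.mul_apply, dotProduct]
    have hLHS : (MSmatF0 m k c * Matrix.of (fun (i : Fin m) (j : Fin d) => J i.castSucc j)) i j
        = (MSmatF0 m k c *ᵥ fun i' => J i'.castSucc j) i := by
      simp [Matrix.mul_apply, Matrix.mulVec, dotProduct]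
    rw [hLHS, hk, hFr, hclos j]
    simp only [Matrix.neg_apply, Matrix.add_apply, Matrix.smul_apply, Matrix.vecMulVec_apply,
      Matrix.of_apply, MSctil, smul_eq_mul]
    ring
  refine ⟨h1, ?_⟩
  have hdet : IsUnit (MSmatF0 m k c).det :=
    isUnit_iff_ne_zero.mpr (MSdetF0 m k hsymm hkpos c hc hpos)
  calc Matrix.of (fun (i : Fin m) (j : Fin d) => J i.castSucc j)
      = (MSmatF0 m k c)⁻¹ * (MSmatF0 m k c
          * Matrix.of (fun (i : Fin m) (j : Fin d) => J i.castSucc j)) := by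
        rw [← Matrix.mul_assoc, Matrix.nonsing_inv_mul _ hdet, Matrix.one_mul]
    _ = -((MSmatF0 m k c)⁻¹
          * (Matrix.of (fun (i : Fin m) (j : Fin d) => D i.castSucc j)
             + α • Matrix.vecMulVec (MSctil m k c) g)) := by
        rw [h1, Matrix.mul_neg]
end

section
/- Algebraic converse of the flux inversion: let d ≥ 1, let J′, D′ ∈ ℝ^{(n−1)×d}, g ∈ ℝ^d and α ∈ ℝ, and suppose F_0 J′ = −(D′ + α c̃′ ⊗ g). Define J ∈ ℝ^{n×d} by taking its first n−1 rows equal to those of J′ and its n-th row equal to −α g − ∑_{i=1}^{n−1} J′_i, and define D ∈ ℝ^{n×d} by taking its first n−1 rows equal to those of D′ and its n-th row equal to −∑_{i=1}^{n−1} D′_i. Then F J = D. -/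
lemma sum_if_split {ι : Type*} [Fintype ι] [DecidableEq ι] (i : ι) (X Y : ι → ℝ) :
    (∑ r, if i = r then X r else Y r) = X i - Y i + ∑ r, Y r := by
  have h : ∀ r ∈ Finset.univ, (if i = r then X r else Y r)
      = (if i = r then X r - Y r else 0) + Y r := by
    intro r _; by_cases h : i = r <;> simp [h]
  rw [Finset.sum_congr rfl h, Finset.sum_add_distrib, Finset.sum_ite_eq]
  simp

/-- algebraic converse of the flux inversion: if
`F₀ J′ = -(D′ + α c̃′ ⊗ g)`, and `J` (resp. `D`) is the `n × d` matrix whose first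
`n - 1` rows are those of `J′` (resp. `D′`) and whose `n`-th row is
`-α g - ∑_{i ≤ n-1} J′ i` (resp. `-∑_{i ≤ n-1} D′ i`), then `F J = D`. -/
theorem flux_gradient_inversion_converse
    (m : ℕ) (hm : 1 ≤ m)
    (k : Fin (m + 1) → Fin (m + 1) → ℝ)
    (hsymm : ∀ i j, k i j = k j i)
    (hkpos : ∀ i j, i ≠ j → 0 < k i j)
    (c : Fin (m + 1) → ℝ)
    (hc : ∀ i, 0 ≤ c i)
    (d : ℕ) (hd : 1 ≤ d)
    (J' D' : Matrix (Fin m) (Fin d) ℝ)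
    (g : Fin d → ℝ) (α : ℝ)
    (hF0J' : MSmatF0 m k c * J' = -(D' + α • Matrix.vecMulVec (MSctil m k c) g))
    (J D : Matrix (Fin (m + 1)) (Fin d) ℝ)
    (hJ : J = Matrix.of fun i j =>
      Fin.lastCases (-(α * g j) - ∑ i' : Fin m, J' i' j) (fun i' => J' i' j) i)
    (hD : D = Matrix.of fun i j =>
      Fin.lastCases (-∑ i' : Fin m, D' i' j) (fun i' => D' i' j) i) :
    MSmatF m k c * J = D := by
  subst hJ hD
  have hrow : ∀ (i : Fin m) (j : Fin d),
      ∑ r, MSmatF m k c i.castSucc r *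
        (Matrix.of fun i j => Fin.lastCases (-(α * g j) - ∑ i' : Fin m, J' i' j)
          (fun i' => J' i' j) i) r j = D' i j := by
    intro i j
    have H := congrFun (congrFun hF0J' i) j
    rw [Matrix.mul_apply] at H
    simp only [MSmatF0, Matrix.of_apply, Matrix.neg_apply, Matrix.add_apply,
      Matrix.smul_apply, Matrix.vecMulVec_apply, smul_eq_mul, MSctil, ite_mul] at H
    rw [sum_if_split] at H
    rw [Finset.sum_erase_eq_sub (Finset.mem_univ i), Fin.sum_univ_castSucc (f := c)] at H
    have hne : ¬ (i.castSucc = Fin.last m) := Fin.ne_last_of_lt (Fin.castSucc_lt_last i)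
    rw [Fin.sum_univ_castSucc]
    simp only [MSmatF, Matrix.of_apply, Fin.lastCases_castSucc, Fin.lastCases_last,
      Fin.castSucc_inj, hne, if_false, ite_mul]
    rw [sum_if_split]
    rw [Finset.sum_erase_eq_sub (Finset.mem_univ i.castSucc),
      Fin.sum_univ_castSucc (f := fun r => k i.castSucc r * c r)]
    simp only [sub_mul, neg_mul, mul_sub, neg_sub, Finset.sum_sub_distrib,
      ← Finset.mul_sum] at H ⊢
    linarith [H]
  ext i j
  rw [Matrix.mul_apply]
  induction i using Fin.lastCases with
  | cast i => simpa using hrow i j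
  | last =>
    have hcol : ∀ r, ∑ i, MSmatF m k c i r = 0 := by
      intro r
      rw [← Finset.add_sum_erase _ _ (Finset.mem_univ r)]
      have h2 : ∑ i ∈ Finset.univ.erase r, MSmatF m k c i r
          = ∑ i ∈ Finset.univ.erase r, k r i * c i := by
        refine Finset.sum_congr rfl fun i hi => ?_
        simp only [MSmatF, Matrix.of_apply, if_neg (Finset.ne_of_mem_erase hi), hsymm i r]
      rw [h2]
      simp [MSmatF]
    have hzero : ∑ i : Fin (m+1), ∑ r, MSmatF m k c i r *
        (Matrix.of fun i j => Fin.lastCases (-(α * g j) - ∑ i' : Fin m, J' i' j)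
          (fun i' => J' i' j) i) r j = 0 := by
      rw [Finset.sum_comm]
      simp_rw [← Finset.sum_mul, hcol, zero_mul, Finset.sum_const_zero]
    rw [Fin.sum_univ_castSucc] at hzero
    rw [Finset.sum_congr rfl (fun i _ => hrow i j)] at hzero
    simp only [Matrix.of_apply] at hzero
    simp only [Matrix.of_apply, Fin.lastCases_last]
    linarith [hzero]
end

section
/- Reduced flux formula (pointwise form of equation (6)): let Ω ⊂ ℝ^d be open, let c_1,…,c_n : Ω → ℝ be nonnegative differentiable functions with 0 < c_min ≤ ∑_{i=1}^n c_i(x) ≤ c_max on Ω, let T : Ω → ℝ be differentiable, let α ∈ ℝ, and let J_1,…,J_n : Ω → ℝ^d. Suppose that at a point x ∈ Ω the flux–gradient relations ∇(c_i T)(x) = −∑_{j≠i} k_{ij} (c_j(x) J_i(x) − c_i(x) J_j(x)) hold for i = 1,…,n, together with the closure relation ∑_{i=1}^n J_i(x) = −α ∇c_tot(x), where c_tot := ∑_{i=1}^n c_i. Then, with J′ = (J_1,…,J_{n−1})^⊤ and c′ = (c_1,…,c_{n−1})^⊤, one has at x: J′ = −T F_0^{−1} ∇c′ − F_0^{−1}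 (c′ ⊗ ∇T) − α F_0^{−1} (c̃′ ⊗ ∇c_tot), where ∇c′ is the (n−1)×d matrix with rows ∇c_i and (v ⊗ w)_{ij} = v_i w_j. -/
/-- The `l`-th partial derivative `∂f/∂x_l` of a function `f : ℝ^d → ℝ` at `x`. -/
noncomputable def pderiv' (d : ℕ) (f : (Fin d → ℝ) → ℝ) (l : Fin d)
    (x : Fin d → ℝ) : ℝ :=
  fderiv ℝ f x (Pi.single l 1)

lemma MSkey_s9 (m : ℕ) (k : Fin (m+1) → Fin (m+1) → ℝ) (a u : Fin (m+1) → ℝ) (i : Fin m) :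
    ∑ j, MSmatF0 m k a i j * u j.castSucc
      = (∑ j' ∈ Finset.univ.erase i.castSucc,
          k i.castSucc j' * (a j' * u i.castSucc - a i.castSucc * u j'))
        + k i.castSucc (Fin.last m) * a i.castSucc * ∑ j', u j' := by
  set i0 := i.castSucc with hi0
  set n0 := Fin.last m with hn0
  set kn := k i0 n0 with hkn
  -- step 1: LHS in terms of full sums over Fin m
  have hL : ∑ j, MSmatF0 m k a i j * u j.castSucc
      = ∑ j : Fin m, (k i0 j.castSucc - kn)
            * (a j.castSucc * u i0 - a i0 * u j.castSucc)
        + (∑ r, a r) * kn * u i0 := by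
    rw [← Finset.sum_erase_add _ _ (Finset.mem_univ i),
        ← Finset.sum_erase_add Finset.univ (fun j : Fin m => (k i0 j.castSucc - kn)
            * (a j.castSucc * u i0 - a i0 * u j.castSucc)) (Finset.mem_univ i)]
    have hdiag : MSmatF0 m k a i i * u i0
        = (∑ j' ∈ Finset.univ.erase i, (k i0 j'.castSucc - kn) * a j'.castSucc) * u i0
          + (∑ r, a r) * kn * u i0 := by
      simp only [MSmatF0, Matrix.of_apply]
      rw [if_pos trivial, add_mul]
    have hoff : ∑ j ∈ Finset.univ.erase i, MSmatF0 m k a i j * u j.castSucc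
        = ∑ j ∈ Finset.univ.erase i, (-((k i0 j.castSucc - kn) * a i0)) * u j.castSucc := by
      refine Finset.sum_congr rfl (fun j hj => ?_)
      have : i ≠ j := fun h => (Finset.ne_of_mem_erase hj) h.symm
      simp only [MSmatF0, Matrix.of_apply, if_neg this]
      rfl
    rw [hdiag, hoff, Finset.sum_mul, ← add_assoc, ← Finset.sum_add_distrib]
    rw [Finset.sum_congr rfl (fun j (_ : j ∈ Finset.univ.erase i) => by
      show (-((k i0 j.castSucc - kn) * a i0)) * u j.castSucc
            + (k i0 j.castSucc - kn) * a j.castSucc * u i0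
          = (k i0 j.castSucc - kn) * (a j.castSucc * u i0 - a i0 * u j.castSucc)
      ring)]
    have hz : (k i0 i.castSucc - kn) * (a i.castSucc * u i0 - a i0 * u i.castSucc) = 0 := by
      rw [← hi0]; ring
    rw [hz, add_zero]
  rw [hL]
  -- step 2: RHS erase sum = full sum, then split off last index
  have hR : (∑ j' ∈ Finset.univ.erase i0,
          k i0 j' * (a j' * u i0 - a i0 * u j'))
      = ∑ j' : Fin (m+1), k i0 j' * (a j' * u i0 - a i0 * u j') := by
    rw [← Finset.sum_erase_add _ _ (Finset.mem_univ i0)]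
    have : k i0 i0 * (a i0 * u i0 - a i0 * u i0) = 0 := by ring
    rw [this, add_zero]
  rw [hR,
    Fin.sum_univ_castSucc (f := fun j' => k i0 j' * (a j' * u i0 - a i0 * u j')),
    Fin.sum_univ_castSucc (f := fun j' => u j'),
    Fin.sum_univ_castSucc (f := fun j' => a j')]
  -- step 3: expand the full k-sum in terms of the (k - kn)-sum
  have e1 : ∑ j : Fin m, k i0 j.castSucc * (a j.castSucc * u i0 - a i0 * u j.castSucc)
      = ∑ j : Fin m, ((k i0 j.castSucc - kn) * (a j.castSucc * u i0 - a i0 * u j.castSucc)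
          + kn * (a j.castSucc * u i0) - kn * (a i0 * u j.castSucc)) :=
    Finset.sum_congr rfl fun j _ => by ring
  have eA : ∑ j : Fin m, kn * (a j.castSucc * u i0)
      = kn * ((∑ j : Fin m, a j.castSucc) * u i0) := by
    rw [← Finset.mul_sum, ← Finset.sum_mul]
  have eB : ∑ j : Fin m, kn * (a i0 * u j.castSucc)
      = kn * (a i0 * (∑ j : Fin m, u j.castSucc)) := by
    rw [← Finset.mul_sum, ← Finset.mul_sum]
  rw [e1, Finset.sum_sub_distrib, Finset.sum_add_distrib, eA, eB]
  ring

lemma MSdet (m : ℕ) (k : Fin (m+1) → Fin (m+1) → ℝ)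
    (hsymm : ∀ i j, k i j = k j i)
    (hkpos : ∀ i j, i ≠ j → 0 < k i j)
    (a : Fin (m+1) → ℝ) (hann : ∀ r, 0 ≤ a r) (hpos : 0 < ∑ r, a r) :
    IsUnit (MSmatF0 m k a).det := by
  rw [isUnit_iff_ne_zero]
  intro hdet
  obtain ⟨v, hv0, hv⟩ := (Matrix.exists_mulVec_eq_zero_iff).2 hdet
  -- extend v to w with total sum zero
  set w : Fin (m+1) → ℝ := Fin.snoc v (-∑ j, v j) with hw
  have hwc : ∀ j : Fin m, w j.castSucc = v j := fun j => Fin.snoc_castSucc _ _ j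
  have hwl : w (Fin.last m) = -∑ j, v j := Fin.snoc_last _ _
  have hwsum : ∑ j', w j' = 0 := by
    rw [Fin.sum_univ_castSucc]
    simp [hwc, hwl]
  -- the full quadratic-form rows
  set Q : Fin (m+1) → ℝ :=
    fun i' => ∑ j', k i' j' * (a j' * w i' - a i' * w j') with hQdef
  have hQapp : ∀ i', Q i' = ∑ j', k i' j' * (a j' * w i' - a i' * w j') :=
    fun i' => rfl
  have hQc : ∀ i : Fin m, Q i.castSucc = 0 := by
    intro i
    have hkey := MSkey_s9 m k a w i
    have hmv : ∑ j, MSmatF0 m k a i j * w j.castSucc = 0 := by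
      have h := congrFun hv i
      rw [Matrix.mulVec, dotProduct] at h
      calc ∑ j, MSmatF0 m k a i j * w j.castSucc
          = ∑ j, MSmatF0 m k a i j * v j :=
            Finset.sum_congr rfl fun j _ => by rw [hwc]
        _ = 0 := h
    have herase : (∑ j' ∈ Finset.univ.erase i.castSucc,
        k i.castSucc j' * (a j' * w i.castSucc - a i.castSucc * w j')) = 0 := by
      rw [hmv, hwsum] at hkey
      linarith [hkey]
    rw [hQapp, ← Finset.sum_erase_add _ _ (Finset.mem_univ i.castSucc), herase,
      zero_add]
    ring
  have hQsum : ∑ i', Q i' = 0 := by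
    have h1 : ∑ i', Q i' = ∑ j', ∑ i', k i' j' * (a j' * w i' - a i' * w j') :=
      Finset.sum_comm
    have h2 : ∑ j' : Fin (m+1), ∑ i' : Fin (m+1), k i' j' * (a j' * w i' - a i' * w j')
        = ∑ i' : Fin (m+1), ∑ j' : Fin (m+1), -(k i' j' * (a j' * w i' - a i' * w j')) := by
      refine Finset.sum_congr rfl fun i' _ => Finset.sum_congr rfl fun j' _ => ?_
      rw [hsymm j' i']
      ring
    have h3 : ∑ i', Q i' = - ∑ i', Q i' := by
      conv_lhs => rw [h1, h2]
      simp only [Finset.sum_neg_distrib]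
      rfl
    linarith
  have hQlast : Q (Fin.last m) = 0 := by
    have h := hQsum
    rw [Fin.sum_univ_castSucc, Finset.sum_congr rfl (fun i _ => hQc i)] at h
    simpa using h
  have hQ : ∀ i', Q i' = 0 := fun i' =>
    Fin.lastCases (motive := fun i' => Q i' = 0) hQlast hQc i'
  -- some index has positive concentration
  obtain ⟨p, hp⟩ : ∃ p, 0 < a p := by
    by_contra h
    push_neg at h
    have : ∑ r, a r = 0 := Finset.sum_eq_zero fun r _ => le_antisymm (h r) (hann r)
    linarith
  -- w vanishes where a vanishes
  have hz : ∀ i', a i' = 0 → w i' = 0 := by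
    intro i' ha
    have hQ' := hQ i'
    rw [hQapp] at hQ'
    have hsplit : ∑ j', k i' j' * (a j' * w i' - a i' * w j')
        = (∑ j', k i' j' * a j') * w i' := by
      rw [Finset.sum_mul]
      refine Finset.sum_congr rfl fun j' _ => by rw [ha]; ring
    rw [hsplit] at hQ'
    have hcoef : 0 < ∑ j', k i' j' * a j' := by
      refine Finset.sum_pos' (fun j' _ => ?_) ⟨p, Finset.mem_univ p, ?_⟩
      · rcases eq_or_ne j' i' with rfl | hne
        · rw [ha, mul_zero]
        · exact mul_nonneg (hkpos i' j' (Ne.symm hne)).le (hann j')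
      · have hne : p ≠ i' := fun h => by rw [h, ha] at hp; exact lt_irrefl 0 hp
        exact mul_pos (hkpos i' p (Ne.symm hne)) hp
    rcases mul_eq_zero.1 hQ' with h | h
    · exact absurd h (ne_of_gt hcoef)
    · exact h
  -- ratio vector
  set rr : Fin (m+1) → ℝ := fun i' => if a i' = 0 then 0 else w i' / a i' with hrr
  have hwr : ∀ i', w i' = rr i' * a i' := by
    intro i'
    rw [hrr]
    by_cases h : a i' = 0
    · simp [h, hz i' h]
    · simp only [if_neg h, div_mul_cancel₀ _ h]
  -- row sums of g vanish
  have hg : ∀ i', ∑ j', k i' j' * (a i' * a j') * (rr i' * (rr i' - rr j')) = 0 := by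
    intro i'
    have : ∑ j', k i' j' * (a i' * a j') * (rr i' * (rr i' - rr j'))
        = rr i' * Q i' := by
      rw [hQapp, Finset.mul_sum]
      refine Finset.sum_congr rfl fun j' _ => ?_
      rw [hwr i', hwr j']
      ring
    rw [this, hQ, mul_zero]
  have hgsum : ∑ i' : Fin (m+1), ∑ j' : Fin (m+1),
      k i' j' * (a i' * a j') * (rr i' * (rr i' - rr j')) = 0 :=
    Finset.sum_eq_zero fun i' _ => hg i'
  have hgsum' : ∑ i' : Fin (m+1), ∑ j' : Fin (m+1),
      k j' i' * (a j' * a i') * (rr j' * (rr j' - rr i')) = 0 := by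
    rw [Finset.sum_comm]
    exact hgsum
  -- sum of squares vanishes
  have hSexp : ∑ i' : Fin (m+1), ∑ j' : Fin (m+1),
      k i' j' * (a i' * a j') * (rr i' - rr j') ^ 2 = 0 := by
    have e1 : ∀ i' j' : Fin (m+1),
        k i' j' * (a i' * a j') * (rr i' - rr j') ^ 2
        = k i' j' * (a i' * a j') * (rr i' * (rr i' - rr j'))
          + k j' i' * (a j' * a i') * (rr j' * (rr j' - rr i')) := by
      intro i' j'
      rw [hsymm j' i']
      ring
    rw [Finset.sum_congr rfl fun i' (_ : i' ∈ Finset.univ) =>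
      Finset.sum_congr rfl fun j' (_ : j' ∈ Finset.univ) => e1 i' j']
    rw [Finset.sum_congr rfl fun i' (_ : i' ∈ Finset.univ) =>
      (Finset.sum_add_distrib (f := fun j' => k i' j' * (a i' * a j') * (rr i' * (rr i' - rr j')))
        (g := fun j' => k j' i' * (a j' * a i') * (rr j' * (rr j' - rr i'))))]
    rw [Finset.sum_add_distrib, hgsum, hgsum', add_zero]
  -- each square term vanishes
  have hterm : ∀ i' j', k i' j' * (a i' * a j') * (rr i' - rr j') ^ 2 = 0 := by
    have hnn : ∀ i' j' : Fin (m+1), 0 ≤ k i' j' * (a i' * a j') * (rr i' - rr j') ^ 2 := by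
      intro i' j'
      rcases eq_or_ne i' j' with rfl | hne
      · simp
      · exact mul_nonneg (mul_nonneg (hkpos i' j' hne).le
          (mul_nonneg (hann i') (hann j'))) (sq_nonneg _)
    intro i' j'
    have houter := (Finset.sum_eq_zero_iff_of_nonneg
      (fun i' _ => Finset.sum_nonneg fun j' _ => hnn i' j')).1 hSexp i' (Finset.mem_univ i')
    exact (Finset.sum_eq_zero_iff_of_nonneg (fun j' _ => hnn i' j')).1 houter j' (Finset.mem_univ j')
  -- rr is constant where a is positive
  have hrp : ∀ i', a i' ≠ 0 → rr i' = rr p := by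
    intro i' ha
    rcases eq_or_ne i' p with rfl | hne
    · rfl
    · have hk := hkpos i' p hne
      have hai : 0 < a i' := lt_of_le_of_ne (hann i') (Ne.symm ha)
      have hne' : k i' p * (a i' * a p) ≠ 0 :=
        ne_of_gt (mul_pos hk (mul_pos hai hp))
      have hsq : (rr i' - rr p) ^ 2 = 0 := by
        rcases mul_eq_zero.1 (hterm i' p) with h | h
        · exact absurd h hne'
        · exact h
      have := pow_eq_zero_iff (n := 2) (by norm_num) |>.1 hsq
      linarith [this]
  -- conclude w = rr p • a, then rr p = 0, then v = 0
  have hweq : ∀ i', w i' = rr p * a i' := by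
    intro i'
    by_cases h : a i' = 0
    · rw [hz i' h, h, mul_zero]
    · rw [hwr i', hrp i' h]
  have hzero : rr p * ∑ r, a r = 0 := by
    rw [Finset.mul_sum, ← Finset.sum_congr rfl fun i' (_ : i' ∈ Finset.univ) => hweq i']
    exact hwsum
  have hrp0 : rr p = 0 := by
    rcases mul_eq_zero.1 hzero with h | h
    · exact h
    · linarith
  apply hv0
  funext j
  have := hweq j.castSucc
  rw [hwc, hrp0, zero_mul] at this
  exact this

lemma pderiv'_mul (d : ℕ) (f g : (Fin d → ℝ) → ℝ) (l : Fin d) (x : Fin d → ℝ)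
    (hf : DifferentiableAt ℝ f x) (hg : DifferentiableAt ℝ g x) :
    pderiv' d (fun y => f y * g y) l x
      = g x * pderiv' d f l x + f x * pderiv' d g l x := by
  unfold pderiv'
  rw [fderiv_fun_mul hf hg]
  simp [smul_eq_mul]
  ring

/-- reduced flux formula, pointwise form of equation (6): if at a
point `x` of the open set `Ω` the flux–gradient relations
`∇(cᵢ T) = -∑_{j ≠ i} k i j (cⱼ Jᵢ - cᵢ Jⱼ)` and the closure relation
`∑ i, Jᵢ = -α ∇c_tot` hold, then the matrix `J′` of the first `n - 1` fluxes
satisfies `J′ = -T F₀⁻¹ ∇c′ - F₀⁻¹ (c′ ⊗ ∇T) - α F₀⁻¹ (c̃′ ⊗ ∇c_tot)`. -/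
theorem reduced_flux_formula
    (m : ℕ) (hm : 1 ≤ m)
    (k : Fin (m + 1) → Fin (m + 1) → ℝ)
    (hsymm : ∀ i j, k i j = k j i)
    (hkpos : ∀ i j, i ≠ j → 0 < k i j)
    (d : ℕ) (hd : 1 ≤ d)
    (Ω : Set (Fin d → ℝ)) (hΩ : IsOpen Ω)
    (c : Fin (m + 1) → (Fin d → ℝ) → ℝ)
    (T : (Fin d → ℝ) → ℝ)
    (α : ℝ)
    (J : Fin (m + 1) → (Fin d → ℝ) → (Fin d → ℝ))
    (cmin cmax : ℝ) (hcmin : 0 < cmin)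
    (hcnn : ∀ i, ∀ y ∈ Ω, 0 ≤ c i y)
    (hlb : ∀ y ∈ Ω, cmin ≤ ∑ i, c i y)
    (hub : ∀ y ∈ Ω, ∑ i, c i y ≤ cmax)
    (x : Fin d → ℝ) (hx : x ∈ Ω)
    (hcdiff : ∀ i, DifferentiableAt ℝ (c i) x)
    (hTdiff : DifferentiableAt ℝ T x)
    (hflux : ∀ i : Fin (m + 1), ∀ l : Fin d,
      pderiv' d (fun y => c i y * T y) l x
        = -∑ j ∈ Finset.univ.erase i,
            k i j * (c j x * J i x l - c i x * J j x l))
    (hclos : ∀ l : Fin d,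
      ∑ i, J i x l = -(α * pderiv' d (fun y => ∑ r, c r y) l x)) :
    (Matrix.of fun (i : Fin m) (l : Fin d) => J i.castSucc x l)
      = -(T x • ((MSmatF0 m k (fun r => c r x))⁻¹
            * Matrix.of (fun (i : Fin m) (l : Fin d) => pderiv' d (c i.castSucc) l x)))
        - (MSmatF0 m k (fun r => c r x))⁻¹
            * Matrix.vecMulVec (fun i : Fin m => c i.castSucc x)
                (fun l => pderiv' d T l x)
        - α • ((MSmatF0 m k (fun r => c r x))⁻¹
            * Matrix.vecMulVec (MSctil m k (fun r => c r x))
                (fun l => pderiv' d (fun y => ∑ r, c r y) l x)) := by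
  have hdet : IsUnit (MSmatF0 m k (fun r => c r x)).det :=
    MSdet m k hsymm hkpos _ (fun r => hcnn r x hx) (lt_of_lt_of_le hcmin (hlb x hx))
  have hFJ : (MSmatF0 m k (fun r => c r x))
        * (Matrix.of fun (i : Fin m) (l : Fin d) => J i.castSucc x l)
      = -(T x • Matrix.of (fun (i : Fin m) (l : Fin d) => pderiv' d (c i.castSucc) l x))
        - Matrix.vecMulVec (fun i : Fin m => c i.castSucc x) (fun l => pderiv' d T l x)
        - α • Matrix.vecMulVec (MSctil m k (fun r => c r x))
            (fun l => pderiv' d (fun y => ∑ r, c r y) l x) := by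
    ext i l
    have hk := MSkey_s9 m k (fun r => c r x) (fun j' => J j' x l) i
    have herase : (∑ j' ∈ Finset.univ.erase i.castSucc,
          k i.castSucc j' * (c j' x * J i.castSucc x l - c i.castSucc x * J j' x l))
        = -(T x * pderiv' d (c i.castSucc) l x + c i.castSucc x * pderiv' d T l x) := by
      have h1 := hflux i.castSucc l
      rw [pderiv'_mul d (c i.castSucc) T l x (hcdiff i.castSucc) hTdiff] at h1
      linarith
    rw [hclos l, herase] at hk
    simp only [Matrix.mul_apply, Matrix.of_apply, Matrix.sub_apply, Matrix.neg_apply,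
      Matrix.smul_apply, Matrix.vecMulVec_apply, MSctil, smul_eq_mul]
    rw [hk]
    ring
  calc (Matrix.of fun (i : Fin m) (l : Fin d) => J i.castSucc x l)
      = (MSmatF0 m k (fun r => c r x))⁻¹
          * ((MSmatF0 m k (fun r => c r x))
            * (Matrix.of fun (i : Fin m) (l : Fin d) => J i.castSucc x l)) := by
        rw [← Matrix.mul_assoc, Matrix.nonsing_inv_mul _ hdet, Matrix.one_mul]
    _ = _ := by
        rw [hFJ, Matrix.mul_sub, Matrix.mul_sub, Matrix.mul_neg, Matrix.mul_smul,
          Matrix.mul_smul]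
end
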